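/- Fix d > 1 and 0 < λ < ∞, and let f_λ denote the unique fixed point of the truncated cavity operator T, extended to ℝ by 1 on (-∞,-λ] and 0 on (λ,∞). Then for all x ≥ 0, f_λ(x) ≤ exp(-x^d / e). -/

import Mathlib

open MeasureTheory Set

/-- The truncated cavity operator `T`. -/
noncomputable def T (d lam : ℝ) (f : ℝ → ℝ) : ℝ → ℝ :=
  fun x => Real.exp (-(d * ∫ y in (-x)..lam, (x + y) ^ (d - 1) * f y))

/-- `f` is the fixed point of the truncated cavity operator on `[-λ, λ]`
(non-increasing and `[0,1]`-valued there), extended to `ℝ` by `1` on `(-∞, -λ]`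
and `0` on `(λ, ∞)`. -/
def ExtFixedPoint (d lam : ℝ) (f : ℝ → ℝ) : Prop :=
  AntitoneOn f (Icc (-lam) lam) ∧
  (∀ x ∈ Icc (-lam) lam, f x ∈ Icc (0 : ℝ) 1) ∧
  (∀ x ≤ -lam, f x = 1) ∧ (∀ x > lam, f x = 0) ∧
  (∀ x ∈ Icc (-lam) lam, T d lam f x = f x)

/-- for all `x ≥ 0`, `f_λ(x) ≤ exp(-x^d / e)`. -/
theorem fixedPoint_uniform_upper (d lam : ℝ) (hd : 1 < d) (hlam : 0 < lam)
    (flam : ℝ → ℝ) (hflam : ExtFixedPoint d lam flam) :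
    ∀ x : ℝ, 0 ≤ x → flam x ≤ Real.exp (-(x ^ d / Real.exp 1)) := by
  obtain ⟨hA, hmem, hneg, hpos, hfix⟩ := hflam
  have hd0 : (0:ℝ) < d := by linarith
  have hd1 : (0:ℝ) ≤ d - 1 := by linarith
  have h0m : (0:ℝ) ∈ Icc (-lam) lam := ⟨by linarith, hlam.le⟩
  -- continuity of the kernels
  have hker : ∀ x : ℝ, Continuous fun s : ℝ => (x + s) ^ (d - 1) := by
    intro x
    rw [continuous_iff_continuousAt]
    intro s
    have h1 : ContinuousAt (fun u : ℝ => u ^ (d - 1)) (x + s) :=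
      Real.continuousAt_rpow_const _ _ (Or.inr (by linarith))
    exact h1.comp ((continuous_const.add continuous_id).continuousAt)
  have hcont_pow : Continuous fun s : ℝ => s ^ (d - 1) := by
    have := hker 0
    simpa using this
  have hcont_powd : Continuous fun s : ℝ => s ^ d := by
    rw [continuous_iff_continuousAt]
    intro s
    exact Real.continuousAt_rpow_const _ _ (Or.inr hd0.le)
  -- integrability of the basic integrands
  have hInt : ∀ (x u v : ℝ), -lam ≤ u → u ≤ v → v ≤ lam →
      IntervalIntegrable (fun s => (x + s) ^ (d - 1) * flam s) volume u v := by
    intro x u v hu huv hv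
    have hsub : uIcc u v ⊆ Icc (-lam) lam := by
      rw [uIcc_of_le huv]
      exact Icc_subset_Icc hu hv
    have hf : IntervalIntegrable flam volume u v := (hA.mono hsub).intervalIntegrable
    exact hf.continuousOn_mul (hker x).continuousOn
  have hInt0 : ∀ (u v : ℝ), -lam ≤ u → u ≤ v → v ≤ lam →
      IntervalIntegrable (fun s => s ^ (d - 1) * flam s) volume u v := by
    intro u v hu huv hv
    have := hInt 0 u v hu huv hv
    simpa using this
  -- `b` is the cavity exponent at `0`
  obtain ⟨b, hbdef⟩ : ∃ b : ℝ, b = d * ∫ y in (0:ℝ)..lam, y ^ (d - 1) * flam y := ⟨_, rfl⟩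
  have hc : flam 0 = Real.exp (-b) := by
    have h := hfix 0 h0m
    simp only [T, neg_zero, zero_add] at h
    rw [hbdef]
    exact h.symm
  have hc0 : 0 < flam 0 := by rw [hc]; exact Real.exp_pos _
  have hb0 : 0 ≤ b := by
    rw [hbdef]
    apply mul_nonneg hd0.le
    apply intervalIntegral.integral_nonneg hlam.le
    intro s hs
    exact mul_nonneg (Real.rpow_nonneg hs.1 _)
      ((hmem s ⟨by linarith [hs.1], hs.2⟩).1)
  -- the key pointwise estimate on `[0, lam]`
  have key : ∀ x : ℝ, 0 ≤ x → x ≤ lam →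
      flam x ≤ Real.exp (-(flam 0 * x ^ d + b)) := by
    intro x hx0 hxl
    have hxm : x ∈ Icc (-lam) lam := ⟨by linarith, hxl⟩
    have hfx := hfix x hxm
    simp only [T] at hfx
    rw [← hfx]
    apply Real.exp_le_exp.mpr
    rw [neg_le_neg_iff]
    have hIa : IntervalIntegrable (fun s => (x + s) ^ (d - 1) * flam s) volume (-x) 0 :=
      hInt x (-x) 0 (by linarith) (by linarith) hlam.le
    have hIb : IntervalIntegrable (fun s => (x + s) ^ (d - 1) * flam s) volume 0 lam :=
      hInt x 0 lam (by linarith) hlam.le le_rfl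
    have hsplit : (∫ y in (-x)..lam, (x + y) ^ (d - 1) * flam y)
        = (∫ y in (-x)..(0:ℝ), (x + y) ^ (d - 1) * flam y)
          + ∫ y in (0:ℝ)..lam, (x + y) ^ (d - 1) * flam y :=
      (intervalIntegral.integral_add_adjacent_intervals hIa hIb).symm
    -- lower bound for the part on `[-x, 0]`
    have hcomp : (∫ y in (-x)..(0:ℝ), (x + y) ^ (d - 1)) = x ^ d / d := by
      have h1 := intervalIntegral.integral_comp_add_left (a := -x) (b := 0)
        (fun u : ℝ => u ^ (d - 1)) x
      rw [h1, add_neg_cancel, add_zero, integral_rpow (Or.inl (by linarith))]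
      have h2 : d - 1 + 1 = d := by ring
      rw [h2, Real.zero_rpow (ne_of_gt hd0)]
      ring
    have h1 : flam 0 * (x ^ d / d) ≤ ∫ y in (-x)..(0:ℝ), (x + y) ^ (d - 1) * flam y := by
      have hmono : ∀ y ∈ Icc (-x) (0:ℝ), (x + y) ^ (d - 1) * flam 0 ≤ (x + y) ^ (d - 1) * flam y := by
        intro y hy
        refine mul_le_mul_of_nonneg_left ?_ (Real.rpow_nonneg (by linarith [hy.1]) _)
        exact hA ⟨by linarith [hy.1], by linarith [hy.2]⟩ h0m hy.2
      calc flam 0 * (x ^ d / d)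
          = ∫ y in (-x)..(0:ℝ), (x + y) ^ (d - 1) * flam 0 := by
            rw [intervalIntegral.integral_mul_const, hcomp, mul_comm]
        _ ≤ _ := intervalIntegral.integral_mono_on (by linarith)
            (((hker x).mul continuous_const).intervalIntegrable _ _) hIa hmono
    -- lower bound for the part on `[0, lam]`
    have h2 : (∫ y in (0:ℝ)..lam, y ^ (d - 1) * flam y)
        ≤ ∫ y in (0:ℝ)..lam, (x + y) ^ (d - 1) * flam y := by
      refine intervalIntegral.integral_mono_on hlam.le
        (hInt0 0 lam (by linarith) hlam.le le_rfl) hIb ?_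
      intro y hy
      refine mul_le_mul_of_nonneg_right ?_ ((hmem y ⟨by linarith [hy.1], hy.2⟩).1)
      exact Real.rpow_le_rpow hy.1 (by linarith) hd1
    rw [hsplit, mul_add]
    have h1' : flam 0 * x ^ d ≤ d * ∫ y in (-x)..(0:ℝ), (x + y) ^ (d - 1) * flam y := by
      have h := mul_le_mul_of_nonneg_left h1 hd0.le
      calc flam 0 * x ^ d = d * (flam 0 * (x ^ d / d)) := by
            field_simp
        _ ≤ _ := h
    have h2' : b ≤ d * ∫ y in (0:ℝ)..lam, (x + y) ^ (d - 1) * flam y := by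
      rw [hbdef]
      exact mul_le_mul_of_nonneg_left h2 hd0.le
    linarith
  -- the crucial bound `b ≤ 1`
  have hb1 : b ≤ 1 := by
    have hpt : ∀ y ∈ Icc (0:ℝ) lam,
        y ^ (d - 1) * flam y ≤ y ^ (d - 1) * Real.exp (-(flam 0 * y ^ d + b)) := by
      intro y hy
      exact mul_le_mul_of_nonneg_left (key y hy.1 hy.2) (Real.rpow_nonneg hy.1 _)
    have hF : ∀ y : ℝ, HasDerivAt
        (fun s : ℝ => -(1 / (flam 0 * d)) * Real.exp (-(flam 0 * s ^ d + b)))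
        (y ^ (d - 1) * Real.exp (-(flam 0 * y ^ d + b))) y := by
      intro y
      have h1 : HasDerivAt (fun s : ℝ => s ^ d) (d * y ^ (d - 1)) y :=
        Real.hasDerivAt_rpow_const (Or.inr hd.le)
      have h2 : HasDerivAt (fun s : ℝ => -(flam 0 * s ^ d + b))
          (-(flam 0 * (d * y ^ (d - 1)))) y :=
        ((h1.const_mul (flam 0)).add_const b).neg
      have h3 := h2.exp.const_mul (-(1 / (flam 0 * d)))
      refine h3.congr_deriv ?_
      have hfd : (1 / (flam 0 * d)) * (flam 0 * d) = 1 := one_div_mul_cancel (mul_pos hc0 hd0).ne'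
      have hE := congrArg (fun t => t * (y ^ (d - 1) * Real.exp (-(flam 0 * y ^ d + b)))) hfd
      linear_combination hE
    have hcont : Continuous fun y : ℝ => y ^ (d - 1) * Real.exp (-(flam 0 * y ^ d + b)) := by
      exact hcont_pow.mul (Real.continuous_exp.comp
        (((continuous_const.mul hcont_powd).add continuous_const).neg))
    have hval : (∫ y in (0:ℝ)..lam, y ^ (d - 1) * Real.exp (-(flam 0 * y ^ d + b)))
        = -(1 / (flam 0 * d)) * Real.exp (-(flam 0 * lam ^ d + b))
          - -(1 / (flam 0 * d)) * Real.exp (-(flam 0 * (0:ℝ) ^ d + b)) :=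
      intervalIntegral.integral_eq_sub_of_hasDerivAt (fun y _ => hF y)
        (hcont.intervalIntegrable _ _)
    have hint_le : (∫ y in (0:ℝ)..lam, y ^ (d - 1) * flam y)
        ≤ ∫ y in (0:ℝ)..lam, y ^ (d - 1) * Real.exp (-(flam 0 * y ^ d + b)) :=
      intervalIntegral.integral_mono_on hlam.le (hInt0 0 lam (by linarith) hlam.le le_rfl)
        (hcont.intervalIntegrable _ _) hpt
    have h0d : ((0:ℝ)) ^ d = 0 := Real.zero_rpow (ne_of_gt hd0)
    rw [h0d, mul_zero, zero_add] at hval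
    have hfin : (∫ y in (0:ℝ)..lam, y ^ (d - 1) * Real.exp (-(flam 0 * y ^ d + b))) ≤ 1 / d := by
      rw [hval]
      have hEl : 0 < Real.exp (-(flam 0 * lam ^ d + b)) := Real.exp_pos _
      have hA1 : 0 < 1 / (flam 0 * d) := by positivity
      have h2 : 1 / (flam 0 * d) * Real.exp (-b) = 1 / d := by
        rw [← hc]
        field_simp
      nlinarith
    have hfinal : b ≤ d * (1 / d) := by
      rw [hbdef]
      exact mul_le_mul_of_nonneg_left (hint_le.trans hfin) hd0.le
    rw [mul_one_div, div_self (ne_of_gt hd0)] at hfinal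
    exact hfinal
  -- conclusion
  intro x hx
  rcases le_or_gt x lam with hxl | hxl
  · refine (key x hx hxl).trans (Real.exp_le_exp.mpr ?_)
    rw [neg_le_neg_iff]
    have hce : Real.exp (-1) ≤ flam 0 := by
      rw [hc]
      exact Real.exp_le_exp.mpr (by linarith)
    have hxd : 0 ≤ x ^ d := Real.rpow_nonneg hx _
    have heq : x ^ d / Real.exp 1 = Real.exp (-1) * x ^ d := by
      rw [Real.exp_neg]
      ring
    rw [heq]
    nlinarith [mul_le_mul_of_nonneg_right hce hxd]
  · rw [hpos x hxl]
    exact (Real.exp_pos _).le
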